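/- The number of rooted d-ary trees with k internal nodes equals the Fuss–Catalan number C_k^{(d)} = (1/(k(d-1)+1)) * binomial(dk, k), for all d ≥ 2 and k ≥ 0. -/

import Mathlib

/-- A rooted `d`-ary tree: either a leaf, or an internal node with an ordered
`d`-tuple of rooted `d`-ary subtrees. -/
inductive DAryTree (d : ℕ) : Type
  | leaf : DAryTree d
  | node : (Fin d → DAryTree d) → DAryTree d

namespace DAryTree

/-- The number of internal nodes of a rooted `d`-ary tree. -/
def internal {d : ℕ} : DAryTree d → ℕ
  | .leaf => 0
  | .node c => 1 + ∑ i : Fin d, internal (c i)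

end DAryTree

open Finset


/-- `G d m k` = coefficient of `x^k` in `f^m` where `f = 1 + x f^d` (Fuss–Catalan). -/
noncomputable def G (d m k : ℕ) : ℚ :=
  if m = 0 then (if k = 0 then 1 else 0)
  else m * ((d * k + m).choose k : ℚ) / (d * k + m)

lemma G_zero (d k : ℕ) : G d 0 k = if k = 0 then 1 else 0 := by simp [G]

lemma G_k0 (d m : ℕ) : G d m 0 = 1 := by
  rcases Nat.eq_zero_or_pos m with h | h
  · simp [G, h]
  · simp only [G, Nat.pos_iff_ne_zero.mp h, if_neg, if_false]
    simp only [Nat.cast_one, Nat.cast_zero, mul_zero, zero_add, mul_one, Nat.choose_zero_right]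
    field_simp

lemma G_eq (d m k : ℕ) (h : m ≠ 0 ∨ k ≠ 0) :
    G d m k = m * ((d * k + m).choose k : ℚ) / (d * k + m) := by
  rcases Nat.eq_zero_or_pos m with rfl | hm
  · rcases h with h | h
    · exact absurd rfl h
    · simp [G, h]
  · simp [G, Nat.pos_iff_ne_zero.mp hm]

lemma G_succ_succ (d : ℕ) (hd : 1 ≤ d) (m k : ℕ) :
    G d (m+1) (k+1) = G d m (k+1) + G d (m+d) k := by
  have hk : k ≤ d * k + d + m :=
    le_trans (Nat.le_mul_of_pos_left k hd) (by omega)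
  have csr := Nat.choose_succ_right_eq (d * k + d + m) k
  have csrQ : ((d * k + d + m).choose (k+1) : ℚ) * (k+1)
      = (d * k + d + m).choose k * ((d:ℚ) * k + d + m - k) := by
    have h2 : ((d * k + d + m - k : ℕ) : ℚ) = (d:ℚ) * k + d + m - k := by
      push_cast [Nat.cast_sub hk]; ring
    rw [← h2]; exact_mod_cast csr
  have pascal : ((d * k + d + m + 1).choose (k+1) : ℚ)
      = (d * k + d + m).choose k + (d * k + d + m).choose (k+1) := by
    exact_mod_cast Nat.choose_succ_succ (d * k + d + m) k
  have hNpos : (0:ℚ) < (d:ℚ) * k + d + m := by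
    have h1 : (1:ℚ) ≤ (d:ℚ) := by exact_mod_cast hd
    positivity
  have core : ((m:ℚ)+1) * (((d * k + d + m + 1).choose (k+1) : ℕ) : ℚ) / ((d:ℚ) * k + d + m + 1)
      = (m:ℚ) * ((d * k + d + m).choose (k+1) : ℚ)/((d:ℚ) * k + d + m)
        + ((m:ℚ)+(d:ℚ)) * ((d * k + d + m).choose k : ℚ)/((d:ℚ) * k + d + m) := by
    rw [pascal]
    generalize hc0 : ((d * k + d + m).choose k : ℚ) = c0 at csrQ ⊢
    generalize hc1 : ((d * k + d + m).choose (k+1) : ℚ) = c1 at csrQ ⊢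
    field_simp
    linear_combination (d:ℚ) * csrQ
  have e1 : d * (k+1) + (m+1) = d * k + d + m + 1 := by ring
  have e2 : d * (k+1) + m = d * k + d + m := by ring
  have e3 : d * k + (m+d) = d * k + d + m := by ring
  rw [G_eq d (m+1) (k+1) (Or.inl (Nat.succ_ne_zero m)),
      G_eq d m (k+1) (Or.inr (Nat.succ_ne_zero k)),
      G_eq d (m+d) k (Or.inl (by omega)), e1, e2, e3]
  push_cast
  linear_combination core

lemma G_succ (d : ℕ) (hd : 1 ≤ d) (p a : ℕ) :
    G d (p+1) a = G d p a + if a = 0 then 0 else G d (p+d) (a-1) := by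
  cases a with
  | zero => simp [G_k0]
  | succ a' => rw [if_neg (Nat.succ_ne_zero a'), Nat.succ_sub_one]
               exact G_succ_succ d hd p a'

lemma rothe (d : ℕ) (hd : 1 ≤ d) :
    ∀ n p m : ℕ, (∑ x ∈ Finset.HasAntidiagonal.antidiagonal n, G d p x.1 * G d m x.2) = G d (p+m) n := by
  intro n
  induction n using Nat.strong_induction_on with
  | _ n ih =>
    intro p m
    induction p with
    | zero =>
      rw [Finset.Nat.sum_antidiagonal_eq_sum_range_succ_mk]
      rw [Finset.sum_eq_single 0]
      · simp [G_zero]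
      · intro i _ hi; simp [G_zero, hi]
      · intro h; exact absurd (Finset.mem_range.mpr (Nat.succ_pos n)) h
    | succ p ihp =>
      have split : ∀ x ∈ Finset.HasAntidiagonal.antidiagonal n,
          G d (p+1) x.1 * G d m x.2
            = G d p x.1 * G d m x.2
              + (if x.1 = 0 then 0 else G d (p+d) (x.1-1)) * G d m x.2 := by
        intro x _
        rw [G_succ d hd, add_mul]
      rw [Finset.sum_congr rfl split, Finset.sum_add_distrib, ihp]
      have S2 : (∑ x ∈ Finset.HasAntidiagonal.antidiagonal n,
          (if x.1 = 0 then 0 else G d (p+d) (x.1-1)) * G d m x.2)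
            = if n = 0 then 0 else G d (p+d+m) (n-1) := by
        rw [Finset.Nat.sum_antidiagonal_eq_sum_range_succ_mk]
        cases n with
        | zero => simp
        | succ n' =>
          rw [Finset.sum_range_succ']
          simp only [Nat.succ_ne_zero, ite_false, eq_self_iff_true, ite_true, zero_mul,
            add_zero, Nat.succ_sub_succ, Nat.succ_sub_one, Nat.sub_zero]
          rw [← Finset.Nat.sum_antidiagonal_eq_sum_range_succ_mk
            (fun x => G d (p+d) x.1 * G d m x.2)]
          exact ih n' (Nat.lt_succ_self n') (p+d) m
      rw [S2]
      have : p + 1 + m = (p + m) + 1 := by ring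
      rw [this, G_succ d hd (p+m) n]
      congr 1
      rcases Nat.eq_zero_or_pos n with rfl | hn
      · simp
      · rw [if_neg (Nat.pos_iff_ne_zero.mp hn), if_neg (Nat.pos_iff_ne_zero.mp hn)]
        congr 1
        ring

lemma natCard_sigma {ι : Type*} [Fintype ι] {β : ι → Type*} [∀ i, Finite (β i)] :
    Nat.card (Σ i, β i) = ∑ i, Nat.card (β i) := by
  have h : ∀ i, Fintype (β i) := fun i => Fintype.ofFinite _
  classical
  letI := h
  simp_rw [Nat.card_eq_fintype_card, Fintype.card_sigma]

/-- Generic splitting of a "sum of two statistics equals j" subtype. -/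
def addEquiv {α β : Type*} (fa : α → ℕ) (fb : β → ℕ) (j : ℕ) :
    {x : α × β // fa x.1 + fb x.2 = j} ≃
      Σ p : (Finset.HasAntidiagonal.antidiagonal j : Finset (ℕ × ℕ)),
        ({a : α // fa a = (p : ℕ × ℕ).1} × {b : β // fb b = (p : ℕ × ℕ).2}) where
  toFun x := ⟨⟨(fa x.1.1, fb x.1.2), by simpa using x.2⟩, ⟨x.1.1, rfl⟩, ⟨x.1.2, rfl⟩⟩
  invFun y := ⟨(y.2.1.1, y.2.2.1), by
    rw [y.2.1.2, y.2.2.2]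
    exact Finset.HasAntidiagonal.mem_antidiagonal.mp y.1.2⟩
  left_inv x := rfl
  right_inv := by
    rintro ⟨⟨⟨u, v⟩, hp⟩, ⟨a, ha⟩, ⟨b, hb⟩⟩
    dsimp only at ha hb
    subst ha; subst hb
    rfl

section Trees
variable {d : ℕ}

lemma internal_node (c : Fin d → DAryTree d) :
    (DAryTree.node c).internal = 1 + ∑ i, (c i).internal := rfl

lemma eq_leaf_of_internal_eq_zero (t : DAryTree d) (ht : t.internal = 0) : t = .leaf := by
  cases t with
  | leaf => rfl
  | node c => rw [internal_node] at ht; omega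

def leafEquiv : {t : DAryTree d // t.internal = 0} ≃ Unit where
  toFun _ := Unit.unit
  invFun _ := ⟨.leaf, rfl⟩
  left_inv t := Subtype.ext (eq_leaf_of_internal_eq_zero t.1 t.2).symm
  right_inv _ := rfl

noncomputable def nodeEquiv (n : ℕ) :
    {f : Fin d → DAryTree d // ∑ i, (f i).internal = n} ≃
      {t : DAryTree d // t.internal = n + 1} := by
  refine Equiv.ofBijective
    (fun f => ⟨.node f.1, by rw [internal_node, f.2, Nat.add_comm]⟩) ⟨?_, ?_⟩
  · rintro ⟨f, hf⟩ ⟨g, hg⟩ h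
    simpa [DAryTree.node.injEq] using h
  · rintro ⟨t, ht⟩
    cases t with
    | leaf => simp [DAryTree.internal] at ht
    | node c =>
      rw [internal_node] at ht
      exact ⟨⟨c, by omega⟩, rfl⟩

def splitEquiv (m j : ℕ) :
    {f : Fin (m+1) → DAryTree d // ∑ i, (f i).internal = j} ≃
      {x : DAryTree d × (Fin m → DAryTree d) //
        x.1.internal + ∑ i, ((x.2 i).internal) = j} where
  toFun f := ⟨(f.1 0, Fin.tail f.1), (Fin.sum_univ_succ _).symm.trans f.2⟩
  invFun x := ⟨Fin.cons x.1.1 x.1.2, by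
    rw [Fin.sum_univ_succ]
    simpa [Fin.cons_zero, Fin.cons_succ] using x.2⟩
  left_inv f := Subtype.ext (Fin.cons_self_tail f.1)
  right_inv x := rfl

def zeroEquiv : {f : Fin 0 → DAryTree d // ∑ i, (f i).internal = 0} ≃ Unit where
  toFun _ := Unit.unit
  invFun _ := ⟨Fin.elim0, by simp⟩
  left_inv f := Subtype.ext (funext fun i => i.elim0)
  right_inv _ := rfl

lemma zeroIsEmpty (j : ℕ) (hj : j ≠ 0) :
    IsEmpty {f : Fin 0 → DAryTree d // ∑ i, (f i).internal = j} := by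
  constructor
  rintro ⟨f, hf⟩
  simp at hf
  exact hj hf.symm

end Trees


theorem key (d : ℕ) (hd : 2 ≤ d) :
    ∀ k : ℕ, Finite {t : DAryTree d // t.internal = k} ∧
      ((Nat.card {t : DAryTree d // t.internal = k} : ℚ) = G d 1 k) := by
  have hd1 : 1 ≤ d := le_trans one_le_two hd
  intro k
  induction k using Nat.strong_induction_on with
  | _ k ih =>
    cases k with
    | zero =>
      refine ⟨Finite.of_equiv _ leafEquiv.symm, ?_⟩
      rw [Nat.card_congr (leafEquiv (d := d)), G_k0]
      simp
    | succ n =>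
      have inner : ∀ m, ∀ j, j ≤ n →
          Finite {f : Fin m → DAryTree d // ∑ i, (f i).internal = j} ∧
          ((Nat.card {f : Fin m → DAryTree d // ∑ i, (f i).internal = j} : ℚ)
            = G d m j) := by
        intro m
        induction m with
        | zero =>
          intro j _
          rcases Nat.eq_zero_or_pos j with rfl | hjpos
          · refine ⟨Finite.of_equiv _ zeroEquiv.symm, ?_⟩
            rw [Nat.card_congr (zeroEquiv (d := d)), G_zero]
            simp
          · haveI := zeroIsEmpty (d := d) j (Nat.pos_iff_ne_zero.mp hjpos)
            refine ⟨inferInstance, ?_⟩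
            rw [Nat.card_of_isEmpty, G_zero, if_neg (Nat.pos_iff_ne_zero.mp hjpos)]
            simp
        | succ m ihm =>
          intro j hj
          have E := (splitEquiv (d := d) m j).trans
            (addEquiv DAryTree.internal
              (fun g : Fin m → DAryTree d => ∑ i, (g i).internal) j)
          haveI hfib : ∀ p : (Finset.HasAntidiagonal.antidiagonal j : Finset (ℕ × ℕ)),
              Finite ({a : DAryTree d // a.internal = (p : ℕ × ℕ).1} ×
                {b : Fin m → DAryTree d // (∑ i, (b i).internal) = (p : ℕ × ℕ).2}) := by
            intro p
            have hmem := Finset.HasAntidiagonal.mem_antidiagonal.mp p.2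
            haveI h1 := (ih (p : ℕ × ℕ).1 (by omega)).1
            haveI h2 := (ihm (p : ℕ × ℕ).2 (by omega)).1
            infer_instance
          refine ⟨Finite.of_equiv _ E.symm, ?_⟩
          rw [Nat.card_congr E, natCard_sigma]
          push_cast
          have step : ∀ p : (Finset.HasAntidiagonal.antidiagonal j : Finset (ℕ × ℕ)),
              ((Nat.card ({a : DAryTree d // a.internal = (p : ℕ × ℕ).1} ×
                {b : Fin m → DAryTree d // (∑ i, (b i).internal) = (p : ℕ × ℕ).2}) : ℕ) : ℚ)
                = G d 1 (p : ℕ × ℕ).1 * G d m (p : ℕ × ℕ).2 := by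
            intro p
            have hmem := Finset.HasAntidiagonal.mem_antidiagonal.mp p.2
            rw [Nat.card_prod]
            push_cast
            rw [(ih (p : ℕ × ℕ).1 (by omega)).2, (ihm (p : ℕ × ℕ).2 (by omega)).2]
          rw [Finset.sum_congr rfl (fun p _ => step p)]
          rw [Finset.sum_coe_sort (Finset.HasAntidiagonal.antidiagonal j)
            (fun x => G d 1 x.1 * G d m x.2)]
          rw [rothe d hd1 j 1 m, Nat.add_comm 1 m]
      obtain ⟨hfinS, hcardS⟩ := inner d n le_rfl
      refine ⟨Finite.of_equiv _ (nodeEquiv n), ?_⟩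
      rw [Nat.card_congr (nodeEquiv (d := d) n).symm, hcardS]
      have h := G_succ_succ d hd1 0 n
      simp only [G_zero, if_neg (Nat.succ_ne_zero n), Nat.zero_add, zero_add] at h
      rw [h]

/-- The number of rooted `d`-ary trees with `k` internal nodes is the
Fuss–Catalan number `C_k^{(d)} = (1/(k(d-1)+1)) * binomial (d*k) k`. -/
theorem dAryTree_count (d : ℕ) (hd : 2 ≤ d) (k : ℕ) :
    Nat.card {t : DAryTree d // t.internal = k}
      = (d * k).choose k / (k * (d - 1) + 1) := by
  have hd1 : 1 ≤ d := le_trans one_le_two hd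
  obtain ⟨e, rfl⟩ : ∃ e, d = e + 1 := ⟨d - 1, by omega⟩
  set d := e + 1
  have hcard := (key d hd k).2
  rw [G_eq d 1 k (Or.inl one_ne_zero)] at hcard
  -- Nat.card * (d*k+1) = choose (d*k+1) k
  have hpos : (0 : ℚ) < ((d * k + 1 : ℕ) : ℚ) := by positivity
  have h1 : (Nat.card {t : DAryTree d // t.internal = k}) * (d * k + 1)
      = (d * k + 1).choose k := by
    have : ((Nat.card {t : DAryTree d // t.internal = k} * (d * k + 1) : ℕ) : ℚ)
        = (((d * k + 1).choose k : ℕ) : ℚ) := by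
      push_cast
      push_cast at hcard
      rw [hcard]
      field_simp
    exact_mod_cast this
  -- ℕ identity: (k*(d-1)+1) * (d*k+1).choose k = (d*k+1) * (d*k).choose k
  have h2 : (k * (d - 1) + 1) * (d * k + 1).choose k = (d * k + 1) * (d * k).choose k := by
    have a1 : (d * k + 1) * (d * k).choose k = (d * k + 1).choose (k + 1) * (k + 1) :=
      Nat.add_one_mul_choose_eq (d * k) k
    have a2 : (d * k + 1).choose (k + 1) * (k + 1)
        = (d * k + 1).choose k * (d * k + 1 - k) :=
      Nat.choose_succ_right_eq (d * k + 1) k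
    have a3 : d * k + 1 - k = k * (d - 1) + 1 := by
      show (e + 1) * k + 1 - k = k * (e + 1 - 1) + 1
      rw [Nat.add_sub_cancel, Nat.add_mul, Nat.one_mul]
      rw [Nat.mul_comm k e]
      omega
    rw [a1, a2, a3, Nat.mul_comm]
  -- combine
  have h3 : Nat.card {t : DAryTree d // t.internal = k} * (k * (d - 1) + 1)
      = (d * k).choose k := by
    have hmul : Nat.card {t : DAryTree d // t.internal = k} * (k * (d - 1) + 1) * (d * k + 1)
        = (d * k).choose k * (d * k + 1) := by
      calc Nat.card {t : DAryTree d // t.internal = k} * (k * (d - 1) + 1) * (d * k + 1)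
          = (k * (d - 1) + 1) * (Nat.card {t : DAryTree d // t.internal = k} * (d * k + 1)) := by ring
        _ = (k * (d - 1) + 1) * (d * k + 1).choose k := by rw [h1]
        _ = (d * k + 1) * (d * k).choose k := h2
        _ = (d * k).choose k * (d * k + 1) := by ring
    exact Nat.eq_of_mul_eq_mul_right (by omega) hmul
  rw [← h3, Nat.mul_div_cancel _ (by omega : 0 < k * (d - 1) + 1)]
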